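/- For every triple (x, y, z) ∈ ℂ³ there exist matrices A, B ∈ SL(2,ℂ) such that tr A = x, tr B = y, and tr(AB) = z. -/

import Mathlib

/-- Surjectivity of the trace coordinates: for every `(x, y, z) ∈ ℂ³` there exist
`A, B ∈ SL(2,ℂ)` with `tr A = x`, `tr B = y` and `tr(AB) = z`. -/
theorem stmt_9 (x y z : ℂ) :
    ∃ A B : Matrix.SpecialLinearGroup (Fin 2) ℂ,
      Matrix.trace A.1 = x ∧ Matrix.trace B.1 = y ∧
      Matrix.trace ((A * B : Matrix.SpecialLinearGroup (Fin 2) ℂ) : Matrix (Fin 2) (Fin 2) ℂ) = z := by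
  obtain ⟨c, hc⟩ : ∃ c : ℂ, c ^ 2 - z * c + 1 = 0 := by
    have hdeg : (Polynomial.X ^ 2 - Polynomial.C z * Polynomial.X + 1 : Polynomial ℂ).degree = 2 := by
      compute_degree!
    have hpos : 0 < (Polynomial.X ^ 2 - Polynomial.C z * Polynomial.X + 1 : Polynomial ℂ).degree := by
      rw [hdeg]; decide
    obtain ⟨c, hc⟩ := Complex.exists_root hpos
    refine ⟨c, ?_⟩
    simpa [Polynomial.IsRoot] using hc
  have hc0 : c ≠ 0 := by
    intro h; rw [h] at hc; simp at hc
  refine ⟨⟨!![x, -1; 1, 0], by simp [Matrix.det_fin_two_of]⟩,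
          ⟨!![0, c; -c⁻¹, y], by simp [Matrix.det_fin_two_of, hc0]⟩, ?_, ?_, ?_⟩
  · simp [Matrix.trace_fin_two]
  · simp [Matrix.trace_fin_two]
  · show Matrix.trace (!![x, -1; 1, 0] * !![0, c; -c⁻¹, y]) = z
    simp [Matrix.trace_fin_two, Matrix.mul_apply, Fin.sum_univ_two]
    field_simp
    linear_combination hc
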